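/- (Proposition 2) The relative error of the posterior mean satisfies ‖x_m − x*‖_{Σ₀⁻¹} ≤ √(tr(Σ_m Σ₀⁻¹)) · ‖x₀ − x*‖_{Σ₀⁻¹}, where ‖v‖_M = √(vᵀ M v). -/

import Mathlib

open Matrix

/-- The `M`-norm `‖v‖_M = √(vᵀ M v)` associated with a symmetric positive definite matrix. -/
noncomputable def matNorm {d : ℕ} (M : Matrix (Fin d) (Fin d) ℝ) (v : Fin d → ℝ) : ℝ :=
  Real.sqrt (v ⬝ᵥ (M *ᵥ v))

lemma quad_le_trace {n : ℕ} {B : Matrix (Fin n) (Fin n) ℝ} (hB : B.PosSemidef)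
    (v : Fin n → ℝ) : v ⬝ᵥ (B *ᵥ v) ≤ B.trace * (v ⬝ᵥ v) := by
  obtain ⟨C, rfl⟩ : ∃ C : Matrix (Fin n) (Fin n) ℝ, B = Cᴴ * C := by
    open scoped MatrixOrder in exact CStarAlgebra.nonneg_iff_eq_star_mul_self.mp hB.nonneg
  rw [conjTranspose_eq_transpose_of_trivial] at *
  have h1 : v ⬝ᵥ ((Cᵀ * C) *ᵥ v) = (C *ᵥ v) ⬝ᵥ (C *ᵥ v) := by
    rw [← mulVec_mulVec, dotProduct_mulVec, vecMul_transpose]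
  have h2 : (Cᵀ * C).trace = ∑ i, ∑ j, C i j ^ 2 := by
    simp only [Matrix.trace, Matrix.mul_apply, Matrix.diag, transpose_apply, ← sq]
    exact Finset.sum_comm ..
  rw [h1, h2, Finset.sum_mul]
  refine Finset.sum_le_sum fun i _ => ?_
  have := Finset.sum_mul_sq_le_sq_mul_sq Finset.univ (fun j => C i j) v
  simpa [mulVec, dotProduct, ← sq] using this

lemma psd_trace_nonneg {n : ℕ} {B : Matrix (Fin n) (Fin n) ℝ} (hB : B.PosSemidef) :
    0 ≤ B.trace := by
  obtain ⟨C, rfl⟩ : ∃ C : Matrix (Fin n) (Fin n) ℝ, B = Cᴴ * C := by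
    open scoped MatrixOrder in exact CStarAlgebra.nonneg_iff_eq_star_mul_self.mp hB.nonneg
  rw [conjTranspose_eq_transpose_of_trivial]
  have h2 : (Cᵀ * C).trace = ∑ i, ∑ j, C i j ^ 2 := by
    simp only [Matrix.trace, Matrix.mul_apply, Matrix.diag, transpose_apply, ← sq]
    exact Finset.sum_comm ..
  rw [h2]; positivity

lemma dot_shift {p n : ℕ} (M : Matrix (Fin p) (Fin n) ℝ) (u : Fin n → ℝ) (v : Fin p → ℝ) :
    (M *ᵥ u) ⬝ᵥ v = u ⬝ᵥ (Mᵀ *ᵥ v) := by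
  rw [dotProduct_mulVec, vecMul_transpose]

/-- **Proposition 2.** The relative error of the posterior mean satisfies
`‖x_m − x*‖_{Σ₀⁻¹} ≤ √(tr(Σ_m Σ₀⁻¹)) ⬝ ‖x₀ − x*‖_{Σ₀⁻¹}`. -/
theorem posterior_mean_relative_error_bound
    (d m : ℕ) (hm : m ≤ d)
    (A : Matrix (Fin d) (Fin d) ℝ) (hA : IsUnit A)
    (b : Fin d → ℝ) (xstar : Fin d → ℝ) (hxstar : xstar = A⁻¹ *ᵥ b)
    (Sigma0 : Matrix (Fin d) (Fin d) ℝ) (hSigma0 : Sigma0.PosDef)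
    (x0 : Fin d → ℝ)
    (S : Matrix (Fin d) (Fin m) ℝ)
    (hS : LinearIndependent ℝ (fun j : Fin m => fun i : Fin d => S i j))
    (Λm : Matrix (Fin m) (Fin m) ℝ) (hΛm : Λm = Sᵀ * A * Sigma0 * Aᵀ * S)
    (r0 : Fin d → ℝ) (hr0 : r0 = b - A *ᵥ x0)
    (xm : Fin d → ℝ) (hxm : xm = x0 + (Sigma0 * Aᵀ * S * Λm⁻¹ * Sᵀ) *ᵥ r0)
    (Sigmam : Matrix (Fin d) (Fin d) ℝ)
    (hSigmam : Sigmam = Sigma0 - Sigma0 * Aᵀ * S * Λm⁻¹ * Sᵀ * A * Sigma0) :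
    matNorm Sigma0⁻¹ (xm - xstar) ≤
      Real.sqrt ((Sigmam * Sigma0⁻¹).trace) * matNorm Sigma0⁻¹ (x0 - xstar) := by
  
  have hS0sym : Sigma0ᵀ = Sigma0 := by
    have := hSigma0.isHermitian
    rwa [IsHermitian, conjTranspose_eq_transpose_of_trivial] at this
  -- Λ is positive definite
  have hSinj : ∀ x : Fin m → ℝ, S *ᵥ x = 0 → x = 0 := by
    intro x hx
    have h := Fintype.linearIndependent_iff.mp hS x
    funext j
    refine h ?_ j
    funext i
    have := congrFun hx i
    simpa [mulVec, dotProduct, mul_comm] using this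
  have hATinj : Function.Injective (Aᵀ.mulVec) :=
    mulVec_injective_iff_isUnit.mpr ((isUnit_transpose _).mpr hA)
  have hΛpd : Λm.PosDef := by
    refine PosDef.of_dotProduct_mulVec_pos ?_ ?_
    · rw [IsHermitian, conjTranspose_eq_transpose_of_trivial, hΛm]
      simp [transpose_mul, hS0sym, Matrix.mul_assoc]
    · intro x hx
      have hw : (Aᵀ * S) *ᵥ x ≠ 0 := by
        intro h
        rw [← mulVec_mulVec] at h
        have : S *ᵥ x = 0 := hATinj (by simpa using h)
        exact hx (hSinj x this)
      have hq : x ⬝ᵥ (Λm *ᵥ x) = ((Aᵀ * S) *ᵥ x) ⬝ᵥ (Sigma0 *ᵥ ((Aᵀ * S) *ᵥ x)) := by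
        rw [dot_shift (Aᵀ * S) x, transpose_mul, transpose_transpose, hΛm]
        simp only [← mulVec_mulVec, Matrix.mul_assoc]
      have := hSigma0.dotProduct_mulVec_pos hw
      simp only [star_trivial] at this ⊢
      rw [hq]
      exact this
  have hΛdet : IsUnit Λm.det := (isUnit_iff_isUnit_det _).mp hΛpd.isUnit
  have hΛinv : Λm * Λm⁻¹ = 1 := mul_nonsing_inv _ hΛdet
  have hΛsym : Λm⁻¹ᵀ = Λm⁻¹ := by
    rw [transpose_nonsing_inv]
    congr 1
    have := hΛpd.isHermitian
    rwa [IsHermitian, conjTranspose_eq_transpose_of_trivial] at this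
  have hS0det := (isUnit_iff_isUnit_det _).mp hSigma0.isUnit
  have hS0inv : Sigma0 * Sigma0⁻¹ = 1 := mul_nonsing_inv _ hS0det
  have hS0inv' : Sigma0⁻¹ * Sigma0 = 1 := nonsing_inv_mul _ hS0det
  have hS0invt : Sigma0⁻¹ᵀ = Sigma0⁻¹ := by rw [transpose_nonsing_inv, hS0sym]
  -- the projector
  obtain ⟨M, hM⟩ : ∃ M, M = Sigma0 * Aᵀ * S * Λm⁻¹ * Sᵀ * A := ⟨_, rfl⟩
  obtain ⟨Q, hQ⟩ : ∃ Q, Q = (1 : Matrix (Fin d) (Fin d) ℝ) - M := ⟨_, rfl⟩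
  have hMM : M * M = M := by
    have h1 : M * M = Sigma0 * Aᵀ * S * (Λm⁻¹ * ((Sᵀ * A * Sigma0 * Aᵀ * S) * (Λm⁻¹ * (Sᵀ * A)))) := by
      simp only [hM, Matrix.mul_assoc]
    rw [h1, ← hΛm, ← Matrix.mul_assoc Λm Λm⁻¹, hΛinv, Matrix.one_mul, hM]
    simp only [Matrix.mul_assoc]
  have hQQ : Q * Q = Q := by
    rw [hQ, sub_mul, mul_sub, mul_sub, hMM]
    simp
  have hSgQ : Sigmam = Q * Sigma0 := by
    rw [hSigmam, hQ, hM, sub_mul, one_mul]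
  have hSgsym : Sigmamᵀ = Sigmam := by
    rw [hSigmam]
    simp only [transpose_sub, transpose_mul, transpose_transpose, hS0sym, hΛsym]
    simp only [Matrix.mul_assoc]
  have hQt : Qᵀ = Sigma0⁻¹ * Sigmam := by
    have h1 : Sigma0 * Qᵀ = Sigmam := by
      rw [← hSgsym, hSgQ, transpose_mul, hS0sym]
    calc Qᵀ = (Sigma0⁻¹ * Sigma0) * Qᵀ := by rw [hS0inv', one_mul]
      _ = Sigma0⁻¹ * Sigmam := by rw [Matrix.mul_assoc, h1]
  have hQ' : Q = Sigmam * Sigma0⁻¹ := by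
    have := congrArg transpose hQt
    rwa [transpose_transpose, transpose_mul, hSgsym, hS0invt] at this
  have hkey : Sigmam * Sigma0⁻¹ * Sigmam = Sigmam := by
    rw [← hQ', hSgQ, ← Matrix.mul_assoc, hQQ]
  -- Sigmam is PSD
  have hSgpsd : Sigmam.PosSemidef := by
    have h := hSigma0.posSemidef.mul_mul_conjTranspose_same Q
    have he : Q * Sigma0 * Qᴴ = Sigmam := by
      rw [conjTranspose_eq_transpose_of_trivial, ← hSgQ, hQt, ← Matrix.mul_assoc, ← hQ', hSgQ,
        ← Matrix.mul_assoc, hQQ]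
    rwa [he] at h
  -- error vector identities
  have hAdet := (isUnit_iff_isUnit_det _).mp hA
  have hAx : A *ᵥ xstar = b := by
    rw [hxstar, mulVec_mulVec, mul_nonsing_inv _ hAdet, one_mulVec]
  obtain ⟨e, he⟩ : ∃ e, e = x0 - xstar := ⟨_, rfl⟩
  have hr0' : r0 = -(A *ᵥ e) := by
    rw [hr0, he, mulVec_sub, hAx, neg_sub]
  have hxme : xm - xstar = Q *ᵥ e := by
    have h1 : (Sigma0 * Aᵀ * S * Λm⁻¹ * Sᵀ) *ᵥ r0 = -(M *ᵥ e) := by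
      rw [hr0', mulVec_neg, mulVec_mulVec, hM]
    rw [hxm, h1, hQ, sub_mulVec, one_mulVec, he]
    abel
  -- square-root of Sigma0⁻¹
  have hPpd : (Sigma0⁻¹).PosDef := hSigma0.inv
  obtain ⟨R, hRR, hRt, hRpsd⟩ : ∃ R : Matrix (Fin d) (Fin d) ℝ,
      R * R = Sigma0⁻¹ ∧ Rᵀ = R ∧ R.PosSemidef := by
    open scoped MatrixOrder in
    refine ⟨CFC.sqrt Sigma0⁻¹, CFC.sqrt_mul_sqrt_self _ hPpd.posSemidef.nonneg, ?_, (CFC.sqrt_nonneg _).posSemidef⟩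
    have := (open scoped MatrixOrder in (CFC.sqrt_nonneg Sigma0⁻¹).posSemidef.isHermitian)
    rwa [IsHermitian, conjTranspose_eq_transpose_of_trivial] at this
  obtain ⟨B, hB⟩ : ∃ B, B = R * Sigmam * R := ⟨_, rfl⟩
  have hBpsd : B.PosSemidef := by
    have h := hSgpsd.mul_mul_conjTranspose_same R
    rwa [conjTranspose_eq_transpose_of_trivial, hRt, ← hB] at h
  -- quadratic form identities
  have hquad1 : (Q *ᵥ e) ⬝ᵥ (Sigma0⁻¹ *ᵥ (Q *ᵥ e)) = (R *ᵥ e) ⬝ᵥ (B *ᵥ (R *ᵥ e)) := by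
    have hQtPQ : Qᵀ * Sigma0⁻¹ * Q = R * B * R := by
      rw [hQt, hQ', hB]
      calc Sigma0⁻¹ * Sigmam * Sigma0⁻¹ * (Sigmam * Sigma0⁻¹)
          = Sigma0⁻¹ * (Sigmam * Sigma0⁻¹ * Sigmam) * Sigma0⁻¹ := by
            simp only [Matrix.mul_assoc]
        _ = Sigma0⁻¹ * Sigmam * Sigma0⁻¹ := by rw [hkey]
        _ = R * (R * Sigmam * R) * R := by rw [← hRR]; simp only [Matrix.mul_assoc]
    rw [dot_shift Q e, mulVec_mulVec, mulVec_mulVec, hQtPQ, ← mulVec_mulVec (M := R * B),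
      ← mulVec_mulVec (M := R), dot_shift R e, hRt]
  have hquad2 : (R *ᵥ e) ⬝ᵥ (R *ᵥ e) = e ⬝ᵥ (Sigma0⁻¹ *ᵥ e) := by
    rw [dot_shift R e, hRt, mulVec_mulVec, hRR]
  have htr : B.trace = (Sigmam * Sigma0⁻¹).trace := by
    rw [hB, trace_mul_comm, ← Matrix.mul_assoc, hRR, trace_mul_comm]
  -- final assembly
  have hmain := quad_le_trace hBpsd (R *ᵥ e)
  rw [hquad2, htr] at hmain
  rw [matNorm, matNorm, hxme, ← he, hquad1]
  calc Real.sqrt ((R *ᵥ e) ⬝ᵥ (B *ᵥ (R *ᵥ e)))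
      ≤ Real.sqrt ((Sigmam * Sigma0⁻¹).trace * (e ⬝ᵥ (Sigma0⁻¹ *ᵥ e))) :=
        Real.sqrt_le_sqrt hmain
    _ = Real.sqrt ((Sigmam * Sigma0⁻¹).trace) * Real.sqrt (e ⬝ᵥ (Sigma0⁻¹ *ᵥ e)) := by
        rw [Real.sqrt_mul (htr ▸ psd_trace_nonneg hBpsd)]
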